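/- arXiv:1608.02718 — 2 statements merged into one kernel-verified Lean document; each statement's English description precedes it below -/
import Mathlib

section
/- Let Y be a weak-strong solution of (DSDE)(γ, x₀): for P-a.e. ω, Y(·,ω) is a continuous Q^ω-martingale solving Y_t = Y₀ + ∫₀^t γ(s, Y_s, ω) dB_s(·,ω), the W^i (i = 1,…,N) are (𝒢_t)-Brownian motions on the product space (Ω₀, 𝒢, 𝐐), and for every s, the map ω ↦ E^{Q^ω}[𝒜(Y_r(·,ω), r ∈ [0,s])] is ℱ_s-measurable for bounded continuous 𝒜. Then: (1) Y is a (𝒢_t)-martingale on (Ω₀, 𝒢, 𝐐), and (2) the covariation [Y, W^i] = 0 for all 1 ≤ i ≤ N. -/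
open MeasureTheory ProbabilityTheory Set

/-- A process `f` is a martingale on the time interval `[0,T]` with respect to the
filtration `𝒢` and measure `μ`. -/
def MartingaleOn {Ω : Type*} {m : MeasurableSpace Ω} (f : ℝ → Ω → ℝ)
    (𝒢 : MeasureTheory.Filtration ℝ m) (μ : MeasureTheory.Measure Ω) (T : ℝ) : Prop :=
  MeasureTheory.Adapted 𝒢 f ∧
  (∀ t ∈ Set.Icc (0:ℝ) T, MeasureTheory.Integrable (f t) μ) ∧
  ∀ s t : ℝ, 0 ≤ s → s ≤ t → t ≤ T → μ[f t | 𝒢 s] =ᵐ[μ] f s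

section Aux

open Filter

lemma myAESM {α β : Type*} {mα : MeasurableSpace α} {mβ : MeasurableSpace β}
    (μ : Measure α) [SFinite μ] (κ : Kernel α β) [IsSFiniteKernel κ]
    {f : α × β → ℝ} (hf : AEStronglyMeasurable f (μ ⊗ₘ κ)) :
    AEStronglyMeasurable (fun x => ∫ y, f (x, y) ∂κ x) μ := by
  rw [Measure.compProd] at hf
  simpa using hf.integral_kernel_compProd

lemma myIntInt {α β : Type*} {mα : MeasurableSpace α} {mβ : MeasurableSpace β}
    (μ : Measure α) [SFinite μ] (κ : Kernel α β) [IsSFiniteKernel κ]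
    {f : α × β → ℝ} (hf : Integrable f (μ ⊗ₘ κ)) :
    Integrable (fun x => ∫ y, f (x, y) ∂κ x) μ := by
  rw [Measure.compProd] at hf
  simpa using hf.integral_compProd

lemma trunc_abs_le (n : ℕ) (x : ℝ) : |max (-(n:ℝ)) (min (n:ℝ) x)| ≤ |x| := by
  rw [abs_le]
  constructor
  · refine le_max_of_le_right (le_min ?_ (neg_abs_le x))
    exact le_trans (neg_nonpos.mpr (abs_nonneg x)) (Nat.cast_nonneg n)
  · refine max_le ?_ ((min_le_right _ _).trans (le_abs_self x))
    exact le_trans (neg_nonpos.mpr (Nat.cast_nonneg n)) (abs_nonneg x)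

lemma trunc_abs_le_n (n : ℕ) (x : ℝ) : |max (-(n:ℝ)) (min (n:ℝ) x)| ≤ n := by
  rw [abs_le]
  refine ⟨le_max_left _ _, max_le ?_ (min_le_left _ _)⟩
  exact le_trans (neg_nonpos.mpr (Nat.cast_nonneg n)) (Nat.cast_nonneg n)

lemma trunc_tendsto (x : ℝ) :
    Tendsto (fun n : ℕ => max (-(n:ℝ)) (min (n:ℝ) x)) atTop (nhds x) := by
  apply tendsto_atTop_of_eventually_const (i₀ := ⌈|x|⌉₊)
  intro n hn
  have hxn : |x| ≤ (n : ℝ) := (Nat.le_ceil _).trans (Nat.cast_le.mpr hn)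
  rw [min_eq_right ((le_abs_self x).trans hxn),
    max_eq_right (le_trans (neg_le_neg hxn) (neg_abs_le x))]

lemma myMeasSetTendsto {β : Type*} [m : MeasurableSpace β] {f : ℕ → β → ℝ}
    (hf : ∀ n, Measurable[m] (f n)) :
    MeasurableSet[m] {x | ∃ c, Tendsto (fun n => f n x) atTop (nhds c)} :=
  measurableSet_exists_tendsto hf

lemma myMeasLimit {β : Type*} [m : MeasurableSpace β] {f : ℕ → β → ℝ} {g : β → ℝ}
    (hf : ∀ n, Measurable[m] (f n))
    (h : ∀ x, Tendsto (fun n => f n x) atTop (nhds (g x))) : Measurable[m] g :=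
  measurable_of_tendsto_metrizable' atTop hf (tendsto_pi_nhds.mpr h)

end Aux

/-- Proposition 2.11: let Y be a weak-strong solution of
(DSDE)(γ,x₀): for P-a.e. ω the process Y(·,ω) is a Q^ω-martingale (expressed by
integration against bounded measurable functionals of the path of Y stopped at
time s); the Wⁱ are (𝒢_t)-martingales on the product space 𝐐 = P ⊗ₘ Q; the
kernel expectations of functionals of the stopped path are ℱ_s-measurable; and
𝒢_s is generated by the path of Y stopped at s together with {∅,Ω₁} ⊗ ℱ_s.
Then (1) Y is a (𝒢_t)-martingale on (Ω₀,𝒢,𝐐) and (2) [Y,Wⁱ] = 0 for 1 ≤ i ≤ N,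
encoded as: each product Y·Wⁱ is a (𝒢_t)-martingale on the product space. -/
theorem weak_strong_solution_product_martingale
    {Ω Ω₁ : Type*} {mΩ : MeasurableSpace Ω} {mΩ₁ : MeasurableSpace Ω₁}
    (P : Measure Ω) [IsProbabilityMeasure P]
    (Q : Kernel Ω Ω₁) [IsMarkovKernel Q]
    (ℱ : MeasureTheory.Filtration ℝ mΩ)
    (𝒢 : MeasureTheory.Filtration ℝ (inferInstance : MeasurableSpace (Ω × Ω₁)))
    (T : ℝ) (hT : 0 ≤ T) (nN : ℕ)
    (W : Fin nN → ℝ → Ω → ℝ) (hWmeas : ∀ i t, Measurable (W i t))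
    (Y : ℝ → Ω × Ω₁ → ℝ) (hYmeas : ∀ t, Measurable (Y t))
    (h𝒢 : ∀ s : ℝ, 𝒢 s =
      MeasurableSpace.comap (fun p : Ω × Ω₁ => fun r : ℝ => Y (min r s) p)
        MeasurableSpace.pi ⊔ MeasurableSpace.comap Prod.fst (ℱ s))
    (hWmart : ∀ i, MartingaleOn (fun t p => W i t p.1) 𝒢 (P ⊗ₘ Q) T)
    (hquenched : ∀ᵐ ω ∂P, ∀ s t : ℝ, 0 ≤ s → s ≤ t → t ≤ T →
      ∀ 𝒜 : (ℝ → ℝ) → ℝ, Measurable 𝒜 → (∃ K, ∀ f, |𝒜 f| ≤ K) →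
        ∫ ω₁, Y t (ω, ω₁) * 𝒜 (fun r => Y (min r s) (ω, ω₁)) ∂(Q ω)
          = ∫ ω₁, Y s (ω, ω₁) * 𝒜 (fun r => Y (min r s) (ω, ω₁)) ∂(Q ω))
    (hmeas3 : ∀ s ∈ Set.Icc (0:ℝ) T,
      ∀ 𝒜 : (ℝ → ℝ) → ℝ, Measurable 𝒜 → (∃ K, ∀ f, |𝒜 f| ≤ K) →
        Measurable[ℱ s] fun ω => ∫ ω₁, 𝒜 (fun r => Y (min r s) (ω, ω₁)) ∂(Q ω))
    (hYint : ∀ t ∈ Set.Icc (0:ℝ) T, Integrable (Y t) (P ⊗ₘ Q))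
    (hYWint : ∀ i, ∀ t ∈ Set.Icc (0:ℝ) T,
      Integrable (fun p => Y t p * W i t p.1) (P ⊗ₘ Q)) :
    MartingaleOn Y 𝒢 (P ⊗ₘ Q) T ∧
    ∀ i, MartingaleOn (fun t p => Y t p * W i t p.1) 𝒢 (P ⊗ₘ Q) T := by
  classical
  -- measurability of the stopped path map
  have hstop : ∀ s : ℝ, Measurable (fun p : Ω × Ω₁ => fun r : ℝ => Y (min r s) p) :=
    fun s => measurable_pi_lambda _ fun r => hYmeas _
  -- Y is adapted
  have hYadapt : ∀ u : ℝ, StronglyMeasurable[𝒢 u] (Y u) := by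
    intro u
    have h0 : Measurable[MeasurableSpace.comap
        (fun p : Ω × Ω₁ => fun r : ℝ => Y (min r u) p) MeasurableSpace.pi]
        (fun p : Ω × Ω₁ => fun r : ℝ => Y (min r u) p) :=
      measurable_iff_comap_le.mpr le_rfl
    have h1 := (measurable_pi_apply u).comp h0
    simp only [Function.comp_def, min_self] at h1
    have h2 : MeasurableSpace.comap
        (fun p : Ω × Ω₁ => fun r : ℝ => Y (min r u) p) MeasurableSpace.pi ≤ 𝒢 u := by
      rw [h𝒢 u]; exact le_sup_left
    exact (h1.mono h2 le_rfl).stronglyMeasurable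
  -- the key set-integral identities
  have key : ∀ s t : ℝ, 0 ≤ s → s ≤ t → t ≤ T →
      (∀ A, MeasurableSet[𝒢 s] A →
        ∫ p in A, Y t p ∂(P ⊗ₘ Q) = ∫ p in A, Y s p ∂(P ⊗ₘ Q)) ∧
      (∀ i A, MeasurableSet[𝒢 s] A →
        ∫ p in A, Y t p * W i t p.1 ∂(P ⊗ₘ Q)
          = ∫ p in A, Y s p * W i s p.1 ∂(P ⊗ₘ Q)) := by
    intro s t hs hst htT
    have hsI : s ∈ Set.Icc (0:ℝ) T := ⟨hs, hst.trans htT⟩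
    have htI : t ∈ Set.Icc (0:ℝ) T := ⟨hs.trans hst, htT⟩
    set S : Set (Set (Ω × Ω₁)) := {A | ∃ B F, MeasurableSet[MeasurableSpace.pi] B ∧
      MeasurableSet[ℱ s] F ∧
      A = (fun p : Ω × Ω₁ => fun r : ℝ => Y (min r s) p) ⁻¹' B ∩ Prod.fst ⁻¹' F} with hSdef
    have hgen : 𝒢 s = MeasurableSpace.generateFrom S := by
      rw [h𝒢 s]
      refine le_antisymm (sup_le ?_ ?_) (MeasurableSpace.generateFrom_le ?_)
      · rintro A ⟨B, hB, rfl⟩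
        exact MeasurableSpace.measurableSet_generateFrom
          ⟨B, Set.univ, hB, MeasurableSet.univ, by simp⟩
      · rintro A ⟨F, hF, rfl⟩
        exact MeasurableSpace.measurableSet_generateFrom
          ⟨Set.univ, F, MeasurableSet.univ, hF, by simp⟩
      · rintro A ⟨B, F, hB, hF, rfl⟩
        exact MeasurableSet.inter
          ((le_sup_left : _ ≤ MeasurableSpace.comap
              (fun p : Ω × Ω₁ => fun r : ℝ => Y (min r s) p) MeasurableSpace.pi ⊔
              MeasurableSpace.comap Prod.fst (ℱ s)) _ ⟨B, hB, rfl⟩)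
          ((le_sup_right : _ ≤ MeasurableSpace.comap
              (fun p : Ω × Ω₁ => fun r : ℝ => Y (min r s) p) MeasurableSpace.pi ⊔
              MeasurableSpace.comap Prod.fst (ℱ s)) _ ⟨F, hF, rfl⟩)
    have hpi : IsPiSystem S := by
      rintro A₁ ⟨B₁, F₁, hB₁, hF₁, rfl⟩ A₂ ⟨B₂, F₂, hB₂, hF₂, rfl⟩ -
      exact ⟨B₁ ∩ B₂, F₁ ∩ F₂, hB₁.inter hB₂, hF₁.inter hF₂, by
        rw [Set.preimage_inter, Set.preimage_inter, Set.inter_inter_inter_comm]⟩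
    have huniv : Set.univ ∈ S := ⟨Set.univ, Set.univ, MeasurableSet.univ, MeasurableSet.univ,
      by simp⟩
    -- π-λ machinery
    have main : ∀ f g : Ω × Ω₁ → ℝ, Integrable f (P ⊗ₘ Q) → Integrable g (P ⊗ₘ Q) →
        (∀ A ∈ S, ∫ p in A, f p ∂(P ⊗ₘ Q) = ∫ p in A, g p ∂(P ⊗ₘ Q)) →
        ∀ A, MeasurableSet[𝒢 s] A →
          ∫ p in A, f p ∂(P ⊗ₘ Q) = ∫ p in A, g p ∂(P ⊗ₘ Q) := by
      intro f g hf hg hbase A hA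
      have huniveq : ∫ p, f p ∂(P ⊗ₘ Q) = ∫ p, g p ∂(P ⊗ₘ Q) := by
        have := hbase _ huniv
        simpa using this
      refine MeasurableSpace.induction_on_inter (m := 𝒢 s)
        (C := fun A _ => ∫ p in A, f p ∂(P ⊗ₘ Q) = ∫ p in A, g p ∂(P ⊗ₘ Q))
        hgen hpi (by simp) hbase ?_ ?_ A hA
      · intro A hAm hAeq
        have hAm' : MeasurableSet A := 𝒢.le s _ hAm
        have h1 := integral_add_compl hAm' hf
        have h2 := integral_add_compl hAm' hg
        have : ∫ p in A, f p ∂(P ⊗ₘ Q) + ∫ p in Aᶜ, f p ∂(P ⊗ₘ Q)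
            = ∫ p in A, g p ∂(P ⊗ₘ Q) + ∫ p in Aᶜ, g p ∂(P ⊗ₘ Q) := by
          rw [h1, h2, huniveq]
        linarith
      · intro f' hdisj hmeas hC
        have hm' : ∀ n, MeasurableSet (f' n) := fun n => 𝒢.le s _ (hmeas n)
        rw [integral_iUnion hm' hdisj hf.integrableOn,
          integral_iUnion hm' hdisj hg.integrableOn]
        exact tsum_congr hC
    -- expansion of set integrals over basic sets via the kernel
    have expand : ∀ (u : ℝ) (V : Ω → ℝ), Measurable V →
        Integrable (fun p : Ω × Ω₁ => Y u p * V p.1) (P ⊗ₘ Q) →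
        ∀ B : Set (ℝ → ℝ), MeasurableSet[MeasurableSpace.pi] B →
        ∀ F : Set Ω, MeasurableSet[ℱ s] F →
        ((∫ p in ((fun p : Ω × Ω₁ => fun r : ℝ => Y (min r s) p) ⁻¹' B ∩ Prod.fst ⁻¹' F),
            Y u p * V p.1 ∂(P ⊗ₘ Q))
          = ∫ ω, F.indicator (fun _ => (1:ℝ)) ω * V ω *
              (∫ ω₁, Y u (ω, ω₁) *
                B.indicator (fun _ => (1:ℝ)) (fun r => Y (min r s) (ω, ω₁)) ∂(Q ω)) ∂P)
        ∧ Integrable (fun ω => F.indicator (fun _ => (1:ℝ)) ω * V ω *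
              (∫ ω₁, Y u (ω, ω₁) *
                B.indicator (fun _ => (1:ℝ)) (fun r => Y (min r s) (ω, ω₁)) ∂(Q ω))) P := by
      intro u V hV hint B hB F hF
      have hχBmeas : Measurable (B.indicator (fun _ => (1:ℝ))) :=
        measurable_const.indicator hB
      have hχFmeas : Measurable (F.indicator (fun _ => (1:ℝ))) :=
        measurable_const.indicator (ℱ.le s _ hF)
      have hχBbd : ∀ x, ‖B.indicator (fun _ => (1:ℝ)) x‖ ≤ 1 := by
        intro x; rw [Set.indicator_apply]; split_ifs <;> simp
      have hχFbd : ∀ x, ‖F.indicator (fun _ => (1:ℝ)) x‖ ≤ 1 := by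
        intro x; rw [Set.indicator_apply]; split_ifs <;> simp
      have hf'meas : AEStronglyMeasurable
          (fun p : Ω × Ω₁ => B.indicator (fun _ => (1:ℝ)) (fun r => Y (min r s) p) *
            F.indicator (fun _ => (1:ℝ)) p.1) (P ⊗ₘ Q) :=
        ((hχBmeas.comp (hstop s)).mul (hχFmeas.comp measurable_fst)).aestronglyMeasurable
      have hf'int : Integrable (fun p : Ω × Ω₁ =>
          (B.indicator (fun _ => (1:ℝ)) (fun r => Y (min r s) p) *
            F.indicator (fun _ => (1:ℝ)) p.1) * (Y u p * V p.1)) (P ⊗ₘ Q) := by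
        refine hint.bdd_mul (c := 1) hf'meas (Filter.Eventually.of_forall fun p => ?_)
        calc ‖B.indicator (fun _ => (1:ℝ)) (fun r => Y (min r s) p) *
            F.indicator (fun _ => (1:ℝ)) p.1‖
            = ‖B.indicator (fun _ => (1:ℝ)) (fun r => Y (min r s) p)‖ *
              ‖F.indicator (fun _ => (1:ℝ)) p.1‖ := norm_mul _ _
          _ ≤ 1 * 1 := mul_le_mul (hχBbd _) (hχFbd _) (norm_nonneg _) zero_le_one
          _ = 1 := mul_one 1
      have hind : ∀ p : Ω × Ω₁,
          ((fun p : Ω × Ω₁ => fun r : ℝ => Y (min r s) p) ⁻¹' B ∩ Prod.fst ⁻¹' F).indicator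
            (fun p => Y u p * V p.1) p
          = (B.indicator (fun _ => (1:ℝ)) (fun r => Y (min r s) p) *
              F.indicator (fun _ => (1:ℝ)) p.1) * (Y u p * V p.1) := by
        intro p
        by_cases h1 : (fun r : ℝ => Y (min r s) p) ∈ B <;>
          by_cases h2 : p.1 ∈ F <;>
          simp [Set.indicator_apply, Set.mem_inter_iff, h1, h2]
      have hAmeas : MeasurableSet
          ((fun p : Ω × Ω₁ => fun r : ℝ => Y (min r s) p) ⁻¹' B ∩ Prod.fst ⁻¹' F) :=
        ((hstop s) hB).inter (measurable_fst (ℱ.le s _ hF))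
      have hinner : ∀ ω, (∫ ω₁,
          (B.indicator (fun _ => (1:ℝ)) (fun r => Y (min r s) (ω, ω₁)) *
            F.indicator (fun _ => (1:ℝ)) ω) * (Y u (ω, ω₁) * V ω) ∂(Q ω))
          = F.indicator (fun _ => (1:ℝ)) ω * V ω *
              (∫ ω₁, Y u (ω, ω₁) *
                B.indicator (fun _ => (1:ℝ)) (fun r => Y (min r s) (ω, ω₁)) ∂(Q ω)) := by
        intro ω
        rw [show (fun ω₁ => (B.indicator (fun _ => (1:ℝ)) (fun r => Y (min r s) (ω, ω₁)) *
            F.indicator (fun _ => (1:ℝ)) ω) * (Y u (ω, ω₁) * V ω))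
          = fun ω₁ => (F.indicator (fun _ => (1:ℝ)) ω * V ω) *
              (Y u (ω, ω₁) *
                B.indicator (fun _ => (1:ℝ)) (fun r => Y (min r s) (ω, ω₁))) from
          funext fun ω₁ => by ring]
        rw [integral_const_mul]
      constructor
      · rw [← integral_indicator hAmeas, integral_congr_ae (Filter.Eventually.of_forall hind),
          Measure.integral_compProd hf'int]
        exact integral_congr_ae (Filter.Eventually.of_forall fun ω => hinner ω)
      · have h1 : Integrable (fun ω => ∫ ω₁,
            (B.indicator (fun _ => (1:ℝ)) (fun r => Y (min r s) (ω, ω₁)) *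
              F.indicator (fun _ => (1:ℝ)) ω) * (Y u (ω, ω₁) * V ω) ∂(Q ω)) P :=
          myIntInt P Q hf'int
        exact h1.congr (Filter.Eventually.of_forall fun ω => hinner ω)
    -- the quenched identity specialised to indicators
    have hquenchB : ∀ B : Set (ℝ → ℝ), MeasurableSet[MeasurableSpace.pi] B →
        ∀ᵐ ω ∂P, (∫ ω₁, Y t (ω, ω₁) *
            B.indicator (fun _ => (1:ℝ)) (fun r => Y (min r s) (ω, ω₁)) ∂(Q ω))
          = ∫ ω₁, Y s (ω, ω₁) *
            B.indicator (fun _ => (1:ℝ)) (fun r => Y (min r s) (ω, ω₁)) ∂(Q ω) := by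
      intro B hB
      filter_upwards [hquenched] with ω hω
      refine hω s t hs hst htT _ (measurable_const.indicator hB) ⟨1, fun f => ?_⟩
      rw [Set.indicator_apply]; split_ifs <;> simp
    constructor
    · -- part 1
      intro A hA
      refine main (Y t) (Y s) (hYint t htI) (hYint s hsI) ?_ A hA
      rintro A' ⟨B, F, hB, hF, rfl⟩
      have e1 := expand t (fun _ => (1:ℝ)) measurable_const (by simpa using hYint t htI) B hB F hF
      have e2 := expand s (fun _ => (1:ℝ)) measurable_const (by simpa using hYint s hsI) B hB F hF
      simp only [mul_one] at e1 e2
      rw [e1.1, e2.1]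
      exact integral_congr_ae ((hquenchB B hB).mono fun ω hω => by simp only [hω])
    · -- part 2
      intro i A hA
      refine main _ _ (hYWint i t htI) (hYWint i s hsI) ?_ A hA
      rintro A' ⟨B, F, hB, hF, rfl⟩
      have e1 := expand t (W i t) (hWmeas i t) (hYWint i t htI) B hB F hF
      have e2 := expand s (W i s) (hWmeas i s) (hYWint i s hsI) B hB F hF
      rw [e1.1, e2.1]
      -- notation for the kernel averages
      set gS : Ω → ℝ := fun ω => ∫ ω₁, Y s (ω, ω₁) *
        B.indicator (fun _ => (1:ℝ)) (fun r => Y (min r s) (ω, ω₁)) ∂(Q ω) with hgSdef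
      set gT : Ω → ℝ := fun ω => ∫ ω₁, Y t (ω, ω₁) *
        B.indicator (fun _ => (1:ℝ)) (fun r => Y (min r s) (ω, ω₁)) ∂(Q ω) with hgTdef
      have hq : gT =ᵐ[P] gS := hquenchB B hB
      -- truncated functionals and their kernel averages
      set gn : ℕ → Ω → ℝ := fun n ω => ∫ ω₁,
        (fun f : ℝ → ℝ => max (-(n:ℝ)) (min (n:ℝ) (f s)) * B.indicator (fun _ => (1:ℝ)) f)
          (fun r => Y (min r s) (ω, ω₁)) ∂(Q ω) with hgndef
      have hχBbd : ∀ x, |B.indicator (fun _ => (1:ℝ)) x| ≤ 1 := by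
        intro x; rw [Set.indicator_apply]; split_ifs <;> simp
      have hgnmeas : ∀ n : ℕ, Measurable[ℱ s] (gn n) := by
        intro n
        refine hmeas3 s hsI
          (fun f : ℝ → ℝ => max (-(n:ℝ)) (min (n:ℝ) (f s)) * B.indicator (fun _ => (1:ℝ)) f)
          ((measurable_const.max (measurable_const.min (measurable_pi_apply s))).mul
            (measurable_const.indicator hB)) ⟨n, fun f => ?_⟩
        calc |max (-(n:ℝ)) (min (n:ℝ) (f s)) * B.indicator (fun _ => (1:ℝ)) f|
            = |max (-(n:ℝ)) (min (n:ℝ) (f s))| * |B.indicator (fun _ => (1:ℝ)) f| :=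
              abs_mul _ _
          _ ≤ n * 1 := mul_le_mul (trunc_abs_le_n n (f s)) (hχBbd f)
              (abs_nonneg _) (Nat.cast_nonneg n)
          _ = n := mul_one _
      have haeQint : ∀ᵐ ω ∂P, Integrable (fun ω₁ => Y s (ω, ω₁)) (Q ω) :=
        ((Measure.integrable_compProd_iff (hYint s hsI).aestronglyMeasurable).mp
          (hYint s hsI)).1
      have haeconv : ∀ᵐ ω ∂P, Filter.Tendsto (fun n : ℕ => gn n ω) Filter.atTop
          (nhds (gS ω)) := by
        filter_upwards [haeQint] with ω hω
        refine tendsto_integral_of_dominated_convergence (fun ω₁ => |Y s (ω, ω₁)|)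
          ?_ hω.abs ?_ ?_
        · intro n
          refine Measurable.aestronglyMeasurable ?_
          refine Measurable.mul ?_ ?_
          · exact measurable_const.max (measurable_const.min
              ((measurable_pi_apply s).comp ((hstop s).comp measurable_prodMk_left)))
          · exact (measurable_const.indicator hB).comp
              ((hstop s).comp measurable_prodMk_left)
        · intro n
          refine Filter.Eventually.of_forall fun ω₁ => ?_
          rw [Real.norm_eq_abs, abs_mul]
          calc |max (-(n:ℝ)) (min (n:ℝ) ((fun r : ℝ => Y (min r s) (ω, ω₁)) s))| *
              |B.indicator (fun _ => (1:ℝ)) (fun r : ℝ => Y (min r s) (ω, ω₁))|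
              ≤ |Y s (ω, ω₁)| * 1 := by
                refine mul_le_mul ?_ (hχBbd _) (abs_nonneg _) (abs_nonneg _)
                simpa [min_self] using trunc_abs_le n ((fun r : ℝ => Y (min r s) (ω, ω₁)) s)
            _ = |Y s (ω, ω₁)| := mul_one _
        · refine Filter.Eventually.of_forall fun ω₁ => ?_
          have := (trunc_tendsto ((fun r : ℝ => Y (min r s) (ω, ω₁)) s)).mul_const
            (B.indicator (fun _ => (1:ℝ)) (fun r : ℝ => Y (min r s) (ω, ω₁)))
          simpa [min_self] using this
      -- a measurable version of gS
      set C : Set Ω := {ω | ∃ c, Filter.Tendsto (fun n : ℕ => gn n ω) Filter.atTop (nhds c)}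
        with hCdef
      have hCmeas : MeasurableSet[ℱ s] C := myMeasSetTendsto (m := ℱ s) fun n => hgnmeas n
      set g' : Ω → ℝ := fun ω =>
        if h : ∃ c, Filter.Tendsto (fun n : ℕ => gn n ω) Filter.atTop (nhds c)
        then h.choose else 0 with hg'def
      have hg'lim : ∀ ω, Filter.Tendsto (fun n : ℕ => C.indicator (gn n) ω) Filter.atTop
          (nhds (g' ω)) := by
        intro ω
        by_cases h : ∃ c, Filter.Tendsto (fun n : ℕ => gn n ω) Filter.atTop (nhds c)
        · have hωC : ω ∈ C := h
          have hval : ∀ n : ℕ, C.indicator (gn n) ω = gn n ω :=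
            fun n => Set.indicator_of_mem hωC _
          simp only [hg'def, dif_pos h]
          simpa only [hval] using h.choose_spec
        · have hωC : ω ∉ C := h
          have hval : ∀ n : ℕ, C.indicator (gn n) ω = 0 :=
            fun n => Set.indicator_of_notMem hωC _
          simp only [hg'def, dif_neg h, hval]
          exact tendsto_const_nhds
      have hg'meas : Measurable[ℱ s] g' :=
        myMeasLimit (m := ℱ s) (fun n => (hgnmeas n).indicator hCmeas) hg'lim
      have hg'ae : g' =ᵐ[P] gS := by
        filter_upwards [haeconv] with ω hω
        have hex : ∃ c, Filter.Tendsto (fun n : ℕ => gn n ω) Filter.atTop (nhds c) :=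
          ⟨gS ω, hω⟩
        simp only [hg'def, dif_pos hex]
        exact tendsto_nhds_unique hex.choose_spec hω
      -- integrability on Ω
      have hintT : Integrable (fun ω => F.indicator (fun _ => (1:ℝ)) ω * W i t ω * gS ω) P :=
        e1.2.congr (hq.mono fun ω hω =>
          congrArg (fun z => F.indicator (fun _ => (1:ℝ)) ω * W i t ω * z) hω)
      have hintS : Integrable (fun ω => F.indicator (fun _ => (1:ℝ)) ω * W i s ω * gS ω) P :=
        e2.2
      have hintT' : Integrable (fun ω => F.indicator (fun _ => (1:ℝ)) ω * W i t ω * g' ω) P :=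
        hintT.congr (hg'ae.mono fun ω hω =>
          congrArg (fun z => F.indicator (fun _ => (1:ℝ)) ω * W i t ω * z) hω.symm)
      have hintS' : Integrable (fun ω => F.indicator (fun _ => (1:ℝ)) ω * W i s ω * g' ω) P :=
        hintS.congr (hg'ae.mono fun ω hω =>
          congrArg (fun z => F.indicator (fun _ => (1:ℝ)) ω * W i s ω * z) hω.symm)
      -- lifting integrals from Ω to the product space
      have hPmap : (P ⊗ₘ Q).map Prod.fst = P := Measure.fst_compProd P Q
      have hlift : ∀ φ : Ω → ℝ, AEStronglyMeasurable φ P →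
          ∫ ω, φ ω ∂P = ∫ p : Ω × Ω₁, φ p.1 ∂(P ⊗ₘ Q) := by
        intro φ hφ
        have hφ' : AEStronglyMeasurable φ ((P ⊗ₘ Q).map Prod.fst) := by rwa [hPmap]
        have h0 : ∫ ω, φ ω ∂((P ⊗ₘ Q).map Prod.fst) = ∫ p : Ω × Ω₁, φ p.1 ∂(P ⊗ₘ Q) :=
          integral_map measurable_fst.aemeasurable hφ'
        rw [hPmap] at h0
        exact h0
      have hliftInt : ∀ φ : Ω → ℝ, Integrable φ P →
          Integrable (fun p : Ω × Ω₁ => φ p.1) (P ⊗ₘ Q) := by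
        intro φ hφ
        have hφ' : Integrable φ ((P ⊗ₘ Q).map Prod.fst) := by rwa [hPmap]
        exact (integrable_map_measure hφ'.aestronglyMeasurable
          measurable_fst.aemeasurable).mp hφ'
      have hg'measΩ : Measurable g' := hg'meas.mono (ℱ.le s) le_rfl
      have hχFmeasΩ : Measurable (F.indicator (fun _ => (1:ℝ))) :=
        measurable_const.indicator (ℱ.le s _ hF)
      have hm_t : AEStronglyMeasurable
          (fun ω => F.indicator (fun _ => (1:ℝ)) ω * W i t ω * g' ω) P :=
        ((hχFmeasΩ.mul (hWmeas i t)).mul hg'measΩ).aestronglyMeasurable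
      have hm_s : AEStronglyMeasurable
          (fun ω => F.indicator (fun _ => (1:ℝ)) ω * W i s ω * g' ω) P :=
        ((hχFmeasΩ.mul (hWmeas i s)).mul hg'measΩ).aestronglyMeasurable
      -- the conditional-expectation exchange on the product space
      have hHmeas : StronglyMeasurable[𝒢 s]
          (fun p : Ω × Ω₁ => F.indicator (fun _ => (1:ℝ)) p.1 * g' p.1) := by
        have h1 : Measurable[ℱ s] (fun ω => F.indicator (fun _ => (1:ℝ)) ω * g' ω) :=
          (measurable_const.indicator hF).mul hg'meas
        have h2 : Measurable[MeasurableSpace.comap Prod.fst (ℱ s)]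
            (fun p : Ω × Ω₁ => F.indicator (fun _ => (1:ℝ)) p.1 * g' p.1) :=
          h1.comp (measurable_iff_comap_le.mpr le_rfl)
        exact (h2.mono (by rw [h𝒢 s]; exact le_sup_right) le_rfl).stronglyMeasurable
      have hWt : Integrable (fun p : Ω × Ω₁ => W i t p.1) (P ⊗ₘ Q) := (hWmart i).2.1 t htI
      have hWcond : (P ⊗ₘ Q)[(fun p : Ω × Ω₁ => W i t p.1)|𝒢 s]
          =ᵐ[P ⊗ₘ Q] (fun p : Ω × Ω₁ => W i s p.1) := (hWmart i).2.2 s t hs hst htT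
      have hmul_t : Integrable
          ((fun p : Ω × Ω₁ => F.indicator (fun _ => (1:ℝ)) p.1 * g' p.1) *
            (fun p : Ω × Ω₁ => W i t p.1)) (P ⊗ₘ Q) := by
        have h0 := hliftInt _ hintT'
        refine h0.congr (Filter.Eventually.of_forall fun p => ?_)
        simp only [Pi.mul_apply]
        ring
      have hcond : (∫ p : Ω × Ω₁,
            (F.indicator (fun _ => (1:ℝ)) p.1 * g' p.1) * W i t p.1 ∂(P ⊗ₘ Q))
          = ∫ p : Ω × Ω₁,
            (F.indicator (fun _ => (1:ℝ)) p.1 * g' p.1) * W i s p.1 ∂(P ⊗ₘ Q) := by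
        have step := condExp_mul_of_stronglyMeasurable_left hHmeas hmul_t hWt
        calc (∫ p : Ω × Ω₁,
              (F.indicator (fun _ => (1:ℝ)) p.1 * g' p.1) * W i t p.1 ∂(P ⊗ₘ Q))
            = ∫ p : Ω × Ω₁, ((P ⊗ₘ Q)[(fun p : Ω × Ω₁ =>
                F.indicator (fun _ => (1:ℝ)) p.1 * g' p.1) *
                (fun p : Ω × Ω₁ => W i t p.1)|𝒢 s]) p ∂(P ⊗ₘ Q) :=
              (integral_condExp (𝒢.le s)).symm
          _ = ∫ p : Ω × Ω₁, ((fun p : Ω × Ω₁ =>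
                F.indicator (fun _ => (1:ℝ)) p.1 * g' p.1) *
                ((P ⊗ₘ Q)[(fun p : Ω × Ω₁ => W i t p.1)|𝒢 s])) p ∂(P ⊗ₘ Q) :=
              integral_congr_ae step
          _ = ∫ p : Ω × Ω₁,
                (F.indicator (fun _ => (1:ℝ)) p.1 * g' p.1) * W i s p.1 ∂(P ⊗ₘ Q) := by
              refine integral_congr_ae (hWcond.mono fun p hp => ?_)
              simp only [Pi.mul_apply, hp]
      -- assemble the chain
      calc (∫ ω, F.indicator (fun _ => (1:ℝ)) ω * W i t ω * gT ω ∂P)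
          = ∫ ω, F.indicator (fun _ => (1:ℝ)) ω * W i t ω * g' ω ∂P := by
            refine integral_congr_ae ?_
            filter_upwards [hq, hg'ae] with ω h1 h2
            simp only [h1, ← h2]
        _ = ∫ p : Ω × Ω₁,
              F.indicator (fun _ => (1:ℝ)) p.1 * W i t p.1 * g' p.1 ∂(P ⊗ₘ Q) :=
            hlift _ hm_t
        _ = ∫ p : Ω × Ω₁,
              (F.indicator (fun _ => (1:ℝ)) p.1 * g' p.1) * W i t p.1 ∂(P ⊗ₘ Q) :=
            integral_congr_ae (Filter.Eventually.of_forall fun p => by ring)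
        _ = ∫ p : Ω × Ω₁,
              (F.indicator (fun _ => (1:ℝ)) p.1 * g' p.1) * W i s p.1 ∂(P ⊗ₘ Q) := hcond
        _ = ∫ p : Ω × Ω₁,
              F.indicator (fun _ => (1:ℝ)) p.1 * W i s p.1 * g' p.1 ∂(P ⊗ₘ Q) :=
            integral_congr_ae (Filter.Eventually.of_forall fun p => by ring)
        _ = ∫ ω, F.indicator (fun _ => (1:ℝ)) ω * W i s ω * g' ω ∂P := (hlift _ hm_s).symm
        _ = ∫ ω, F.indicator (fun _ => (1:ℝ)) ω * W i s ω * gS ω ∂P := by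
            refine integral_congr_ae ?_
            filter_upwards [hg'ae] with ω h2
            simp only [h2]
  -- conclusion
  have hG : ∀ s : ℝ, (𝒢 s) ≤ (inferInstance : MeasurableSpace (Ω × Ω₁)) := fun s => 𝒢.le s
  constructor
  · refine ⟨fun u => (hYadapt u).measurable, hYint, ?_⟩
    intro s t hs hst htT
    refine (ae_eq_condExp_of_forall_setIntegral_eq (𝒢.le s)
      (hYint t ⟨hs.trans hst, htT⟩)
      (fun A hA _ => (hYint s ⟨hs, hst.trans htT⟩).integrableOn)
      (fun A hA _ => ((key s t hs hst htT).1 A hA).symm)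
      ((hYadapt s).aestronglyMeasurable)).symm
  · intro i
    refine ⟨fun u => (hYadapt u).measurable.mul ((hWmart i).1 u), hYWint i, ?_⟩
    intro s t hs hst htT
    refine (ae_eq_condExp_of_forall_setIntegral_eq (𝒢.le s)
      (hYWint i t ⟨hs.trans hst, htT⟩)
      (fun A hA _ => (hYWint i s ⟨hs, hst.trans htT⟩).integrableOn)
      (fun A hA _ => ((key s t hs hst htT).2 i A hA).symm)
      (((hYadapt s).mul ((hWmart i).1 s).stronglyMeasurable).aestronglyMeasurable)).symm
end

section
/- Let (μ_n) be a sequence of finite measures on a metric space S and μ a finite measure on S, all with total mass uniformly bounded. Suppose there are compact sets K_m ⊂ S with μ_n(K_m^c) < 1/m for all n and μ(K_m^c) < 1/m, and suppose that ∫ g dμ_n → ∫ g dμ for every bounded continuous g : S → ℝ. Let F : S → ℝ be bounded and continuous. Then ∫ F dμ_n → ∫ F dμ. More generally (Corollary 7.7 of the paper): if Q^{κ_n}(·,ω) are random probability kernels converging in the stable sense to Q(·,ω), and F : Ω₁ × Ω → ℝ is bounded, measurable, and ω-a.s. continuous in the first variable, then ∫_Ω dP(ω) ∫_{Ω₁}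 F(ω₁,ω) (Q^{κ_n}(dω₁,ω) − Q(dω₁,ω)) → 0. -/
open MeasureTheory ProbabilityTheory Filter Set
open scoped ENNReal BoundedContinuousFunction

private lemma one_div_nat_succ_eventually_lt {ε : ℝ} (hε : 0 < ε) :
    ∀ᶠ k : ℕ in atTop, 1 / ((k : ℝ) + 1) < ε :=
  tendsto_one_div_add_atTop_nhds_zero_nat.eventually (gt_mem_nhds hε)

/-- (first part) if finite measures μₙ on a metric space with
uniformly bounded masses are uniformly tight and converge weakly to μ (tested on
bounded continuous functions), then ∫F dμₙ → ∫F dμ for every bounded continuous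
F.  (Second, general part — Corollary 7.7 of the paper:) if random probability
kernels Q^{κₙ}(·,ω) converge in the stable sense to Q(·,ω) and are uniformly
tight, then for every bounded measurable F(ω₁,ω) which is a.s. continuous in ω₁,
∫ dP(ω) ∫ F(ω₁,ω)(Q^{κₙ}(dω₁,ω) − Q(dω₁,ω)) → 0. -/
theorem stable_convergence_of_kernels
    {S : Type*} [MetricSpace S] [MeasurableSpace S] [OpensMeasurableSpace S]
    (μn : ℕ → Measure S) (μ : Measure S)
    (hfin : ∀ n, IsFiniteMeasure (μn n)) (hfin' : IsFiniteMeasure μ)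
    (hmass : ∃ c : ℝ≥0∞, c ≠ ⊤ ∧ (∀ n, μn n Set.univ ≤ c) ∧ μ Set.univ ≤ c)
    (htightS : ∀ m : ℕ, ∃ K : Set S, IsCompact K ∧
      (∀ n, μn n Kᶜ < 1 / (m + 1 : ℝ≥0∞)) ∧ μ Kᶜ < 1 / (m + 1 : ℝ≥0∞))
    (hconvS : ∀ g : S →ᵇ ℝ,
      Tendsto (fun n => ∫ x, g x ∂(μn n)) atTop (nhds (∫ x, g x ∂μ)))
    {Ω Ω₁ : Type*} [MeasurableSpace Ω] [MetricSpace Ω₁] [MeasurableSpace Ω₁]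
    [BorelSpace Ω₁]
    (P : Measure Ω) [IsProbabilityMeasure P]
    (Qn : ℕ → Kernel Ω Ω₁) (Q : Kernel Ω Ω₁)
    [∀ n, IsMarkovKernel (Qn n)] [IsMarkovKernel Q]
    (htight : ∀ m : ℕ, ∃ K : Set Ω₁, IsCompact K ∧
      (∀ n ω, Qn n ω Kᶜ < 1 / (m + 1 : ℝ≥0∞)) ∧ ∀ ω, Q ω Kᶜ < 1 / (m + 1 : ℝ≥0∞))
    (hstable : ∀ (G : Ω₁ →ᵇ ℝ) (R : Ω → ℝ), Measurable R → (∃ c, ∀ ω, |R ω| ≤ c) →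
      Tendsto (fun n => ∫ ω, R ω * ∫ ω₁, G ω₁ ∂(Qn n ω) ∂P) atTop
        (nhds (∫ ω, R ω * ∫ ω₁, G ω₁ ∂(Q ω) ∂P)))
    (F : Ω₁ → Ω → ℝ) (hFm : Measurable (Function.uncurry F))
    (hFb : ∃ c, ∀ ω₁ ω, |F ω₁ ω| ≤ c)
    (hFc : ∀ᵐ ω ∂P, Continuous fun ω₁ => F ω₁ ω) :
    (∀ F₀ : S →ᵇ ℝ,
      Tendsto (fun n => ∫ x, F₀ x ∂(μn n)) atTop (nhds (∫ x, F₀ x ∂μ))) ∧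
    Tendsto
      (fun n => ∫ ω, ((∫ ω₁, F ω₁ ω ∂(Qn n ω)) - ∫ ω₁, F ω₁ ω ∂(Q ω)) ∂P)
      atTop (nhds 0) := by
  refine ⟨fun F₀ => hconvS F₀, ?_⟩
  classical
  obtain ⟨c₀, hc₀⟩ := hFb
  set c : ℝ := max c₀ 0 with hcdef
  have hc0 : 0 ≤ c := le_max_right _ _
  have hFb' : ∀ ω₁ ω, |F ω₁ ω| ≤ c := fun ω₁ ω => (hc₀ ω₁ ω).trans (le_max_left _ _)
  -- measurability of sections
  have hFsec1 : ∀ ω₁, Measurable fun ω => F ω₁ ω := fun ω₁ =>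
    hFm.comp measurable_prodMk_left
  have hFsec2 : ∀ ω, Measurable fun ω₁ => F ω₁ ω := fun ω =>
    hFm.comp measurable_prodMk_right
  -- measurability of kernel integrals of F
  have hFswap : StronglyMeasurable (Function.uncurry (fun (ω : Ω) (ω₁ : Ω₁) => F ω₁ ω)) := by
    have : Measurable (Function.uncurry (fun (ω : Ω) (ω₁ : Ω₁) => F ω₁ ω)) := by
      have := hFm.comp (measurable_swap (α := Ω) (β := Ω₁))
      exact this
    exact this.stronglyMeasurable
  have hXmeas : ∀ n, Measurable fun ω => ∫ ω₁, F ω₁ ω ∂(Qn n ω) :=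
    fun n => (hFswap.integral_kernel_prod_right (κ := Qn n)).measurable
  have hYmeas : Measurable fun ω => ∫ ω₁, F ω₁ ω ∂(Q ω) :=
    (hFswap.integral_kernel_prod_right (κ := Q)).measurable
  rw [Metric.tendsto_atTop]
  intro ε hε
  -- choose m
  obtain ⟨m, hm⟩ := exists_nat_gt (16 * c / ε)
  set rm : ℝ := 1 / ((m : ℝ) + 1) with hrmdef
  have hrm_pos : 0 < rm := by positivity
  have hr4 : 4 * c * rm < ε / 4 := by
    have h1 : 16 * c / ε < (m : ℝ) + 1 := hm.trans (by linarith)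
    have h2 : 16 * c < ε * ((m : ℝ) + 1) := by
      rw [div_lt_iff₀ hε] at h1; linarith [h1]
    rw [hrmdef]
    rw [mul_one_div, div_lt_div_iff₀ (by positivity) (by norm_num : (0:ℝ) < 4)]
    nlinarith [h2]
  obtain ⟨K, hKc, hQnK, hQK⟩ := htight m
  have hKmeas : MeasurableSet K := hKc.isClosed.measurableSet
  -- tail bound in ℝ
  have htoReal : ∀ (ν : Measure Ω₁), ν Kᶜ < 1 / ((m : ℝ≥0∞) + 1) → (ν Kᶜ).toReal ≤ rm := by
    intro ν h
    have hne : (1 / ((m : ℝ≥0∞) + 1)) ≠ ⊤ := by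
      simp [ENNReal.div_eq_top]
    have := ENNReal.toReal_mono hne h.le
    refine this.trans ?_
    rw [ENNReal.toReal_div]
    simp only [ENNReal.toReal_one, hrmdef]
    have h3 : ((m : ℝ≥0∞) + 1).toReal = (m : ℝ) + 1 := by
      rw [ENNReal.toReal_add (by simp) (by simp)]; simp
    rw [h3]
  -- countable dense subset of K
  have hsepK : TopologicalSpace.SeparableSpace (↥K) := hKc.isSeparable.separableSpace
  obtain ⟨D0, hD0c, hD0d⟩ := TopologicalSpace.exists_countable_dense (↥K)
  set D : Set Ω₁ := ((↑) : ↥K → Ω₁) '' D0 with hDdef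
  have hDc : D.Countable := hD0c.image _
  have hDK : D ⊆ K := by rintro _ ⟨x, -, rfl⟩; exact x.2
  have hDdense : ∀ x ∈ K, ∀ r : ℝ, 0 < r → ∃ d ∈ D, dist x d < r := by
    intro x hx r hr
    obtain ⟨y, hy1, hy2⟩ := Metric.dense_iff.1 hD0d ⟨x, hx⟩ r hr
    exact ⟨(y : Ω₁), ⟨y, hy2, rfl⟩, by
      simpa [Subtype.dist_eq, dist_comm] using hy1⟩
  -- error functions
  set Pk : ℕ → Set (Ω₁ × Ω₁) := fun k =>
    {q : Ω₁ × Ω₁ | q.1 ∈ D ∧ q.2 ∈ D ∧ dist q.1 q.2 < 1 / ((k : ℝ) + 1)} with hPkdef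
  have hPkc : ∀ k, (Pk k).Countable := by
    intro k
    refine Set.Countable.mono (fun q hq => ?_) (hDc.prod hDc)
    exact Set.mem_prod.2 ⟨hq.1, hq.2.1⟩
  set E : ℕ → Ω → ℝ≥0∞ := fun k ω =>
    ⨆ p ∈ Pk k, ENNReal.ofReal |F p.1 ω - F p.2 ω| with hEdef
  have hEmeas : ∀ k, Measurable (E k) := by
    intro k
    refine Measurable.biSup _ (hPkc k) (fun p _ => ?_)
    exact ENNReal.measurable_ofReal.comp ((hFsec1 p.1).sub (hFsec1 p.2)).abs
  have hEbd : ∀ k ω, E k ω ≤ ENNReal.ofReal (2 * c) := by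
    intro k ω
    refine iSup₂_le (fun p _ => ENNReal.ofReal_le_ofReal ?_)
    calc |F p.1 ω - F p.2 ω| ≤ |F p.1 ω| + |F p.2 ω| := abs_sub _ _
      _ ≤ c + c := add_le_add (hFb' _ _) (hFb' _ _)
      _ = 2 * c := by ring
  have hEtop : ∀ k ω, E k ω ≠ ⊤ := fun k ω =>
    ((hEbd k ω).trans_lt ENNReal.ofReal_lt_top).ne
  set e : ℕ → Ω → ℝ := fun k ω => (E k ω).toReal with hedef
  have hemeas : ∀ k, Measurable (e k) := fun k => (hEmeas k).ennreal_toReal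
  have hennn : ∀ k ω, 0 ≤ e k ω := fun k ω => ENNReal.toReal_nonneg
  have hele : ∀ k ω, e k ω ≤ 2 * c := by
    intro k ω
    have := ENNReal.toReal_mono ENNReal.ofReal_ne_top (hEbd k ω)
    rwa [ENNReal.toReal_ofReal (by positivity)] at this
  have hterm : ∀ k ω p, p ∈ Pk k → |F p.1 ω - F p.2 ω| ≤ e k ω := by
    intro k ω p hp
    have h1 : ENNReal.ofReal |F p.1 ω - F p.2 ω| ≤ E k ω := le_biSup (f := fun p : Ω₁ × Ω₁ => ENNReal.ofReal |F p.1 ω - F p.2 ω|) hp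
    have h2 := ENNReal.toReal_mono (hEtop k ω) h1
    rwa [ENNReal.toReal_ofReal (abs_nonneg _)] at h2
  -- a.e. convergence of the moduli of continuity
  have heconv : ∀ᵐ ω ∂P, Tendsto (fun k => e k ω) atTop (nhds 0) := by
    filter_upwards [hFc] with ω hω
    rw [Metric.tendsto_atTop]
    intro ε' hε'
    have huc := hKc.uniformContinuousOn_of_continuous hω.continuousOn
    rw [Metric.uniformContinuousOn_iff] at huc
    obtain ⟨δ, hδ, hδ'⟩ := huc (ε' / 2) (by positivity)
    obtain ⟨N, hN⟩ := (one_div_nat_succ_eventually_lt hδ).exists_forall_of_atTop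
    refine ⟨N, fun k hk => ?_⟩
    have hek : e k ω ≤ ε' / 2 := by
      have hE : E k ω ≤ ENNReal.ofReal (ε' / 2) := by
        refine iSup₂_le (fun p hp => ENNReal.ofReal_le_ofReal ?_)
        have hd : dist p.1 p.2 < δ := hp.2.2.trans (hN k hk)
        have := hδ' p.1 (hDK hp.1) p.2 (hDK hp.2.1) hd
        rw [Real.dist_eq] at this
        exact this.le
      have := ENNReal.toReal_mono ENNReal.ofReal_ne_top hE
      rwa [ENNReal.toReal_ofReal (by positivity)] at this
    rw [Real.dist_eq, sub_zero, abs_of_nonneg (hennn k ω)]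
    linarith
  have hint_e : ∀ k, Integrable (e k) P := by
    intro k
    refine Integrable.mono' (integrable_const (2 * c))
      (hemeas k).aestronglyMeasurable (ae_of_all _ fun ω => ?_)
    rw [Real.norm_eq_abs, abs_of_nonneg (hennn k ω)]
    exact hele k ω
  have hDCT : Tendsto (fun k => ∫ ω, e k ω ∂P) atTop (nhds 0) := by
    have h0 : (0 : ℝ) = ∫ (_ : Ω), (0 : ℝ) ∂P := by simp
    rw [h0]
    refine tendsto_integral_of_dominated_convergence (fun _ => 2 * c)
      (fun k => (hemeas k).aestronglyMeasurable) (integrable_const _)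
      (fun k => ae_of_all _ fun ω => ?_) heconv
    rw [Real.norm_eq_abs, abs_of_nonneg (hennn k ω)]
    exact hele k ω
  obtain ⟨k, hk⟩ := (hDCT.eventually (gt_mem_nhds (show (0:ℝ) < ε / 8 by positivity))).exists
  set δk : ℝ := 1 / ((k : ℝ) + 1) with hδkdef
  have hδk : 0 < δk := by positivity
  -- finite cover of K by balls of radius δk/2 centered in D
  have hcov : K ⊆ ⋃ d : ↥D, Metric.ball (d : Ω₁) (δk / 2) := by
    intro x hx
    obtain ⟨d, hd, hdx⟩ := hDdense x hx (δk / 2) (by positivity)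
    exact Set.mem_iUnion.2 ⟨⟨d, hd⟩, by simpa [Metric.mem_ball, dist_comm] using hdx⟩
  obtain ⟨T, hT⟩ := hKc.elim_finite_subcover
    (fun d : ↥D => Metric.ball (d : Ω₁) (δk / 2)) (fun _ => Metric.isOpen_ball) hcov
  -- partition of unity
  set ψ : ↥D → Ω₁ → ℝ := fun d x => max (δk - dist x (d : Ω₁)) 0 with hψdef
  have hψcont : ∀ d, Continuous (ψ d) :=
    fun d => ((continuous_const.sub (continuous_id.dist continuous_const)).max
      continuous_const)
  have hψnn : ∀ d x, 0 ≤ ψ d x := fun d x => le_max_right _ _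
  have hψle : ∀ d x, ψ d x ≤ δk := fun d x =>
    max_le (by linarith [dist_nonneg (x := x) (y := (d : Ω₁))]) hδk.le
  set Den : Ω₁ → ℝ := fun x => max (∑ d ∈ T, ψ d x) (δk / 2) with hDendef
  have hDenpos : ∀ x, 0 < Den x := fun x => lt_of_lt_of_le (by positivity) (le_max_right _ _)
  have hDencont : Continuous Den :=
    (continuous_finset_sum _ fun d _ => hψcont d).max continuous_const
  set φ : ↥D → Ω₁ → ℝ := fun d x => ψ d x / Den x with hφdef
  have hφcont : ∀ d, Continuous (φ d) :=
    fun d => (hψcont d).div hDencont (fun x => (hDenpos x).ne')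
  have hφnn : ∀ d x, 0 ≤ φ d x := fun d x => div_nonneg (hψnn d x) (hDenpos x).le
  have hφsumle : ∀ x, ∑ d ∈ T, φ d x ≤ 1 := by
    intro x
    rw [hφdef, ← Finset.sum_div]
    exact (div_le_one (hDenpos x)).2 (le_max_left _ _)
  have hφsumK : ∀ x ∈ K, ∑ d ∈ T, φ d x = 1 := by
    intro x hx
    obtain ⟨d, hd, hxd⟩ := Set.mem_iUnion₂.1 (hT hx)
    have hψd : δk / 2 ≤ ψ d x := by
      have : dist x (d : Ω₁) < δk / 2 := Metric.mem_ball.1 hxd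
      rw [hψdef]
      simp only []
      refine le_max_of_le_left (by linarith)
    have hsum : δk / 2 ≤ ∑ d ∈ T, ψ d x :=
      hψd.trans (Finset.single_le_sum (fun i _ => hψnn i x) hd)
    have hDen : Den x = ∑ d ∈ T, ψ d x := max_eq_left hsum
    rw [hφdef]
    simp only []
    rw [← Finset.sum_div, hDen, div_self (by linarith)]
  have hφsupp : ∀ d x, φ d x ≠ 0 → dist x (d : Ω₁) < δk := by
    intro d x h
    by_contra hge
    push_neg at hge
    apply h
    rw [hφdef]
    simp only []
    rw [hψdef]
    simp only []
    rw [max_eq_right (by linarith), zero_div]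
  have hφbd : ∀ d x, ‖φ d x‖ ≤ 2 := by
    intro d x
    rw [Real.norm_eq_abs, abs_of_nonneg (hφnn d x)]
    have h1 : φ d x ≤ ψ d x / (δk / 2) :=
      div_le_div_of_nonneg_left (hψnn d x) (by positivity) (le_max_right _ _)
    have h2 : ψ d x / (δk / 2) ≤ δk / (δk / 2) := by
      gcongr
      exact hψle d x
    have h3 : δk / (δk / 2) = 2 := by field_simp
    linarith
  -- bounded continuous functions and coefficients
  set G : ↥D → (Ω₁ →ᵇ ℝ) := fun d =>
    BoundedContinuousFunction.ofNormedAddCommGroup (φ d) (hφcont d) 2 (hφbd d) with hGdef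
  have hGcoe : ∀ d x, G d x = φ d x := fun d x => rfl
  set R : ↥D → Ω → ℝ := fun d ω => F (d : Ω₁) ω with hRdef
  have hRmeas : ∀ d, Measurable (R d) := fun d => hFsec1 _
  have hRbd : ∀ d ω, |R d ω| ≤ c := fun d ω => hFb' _ _
  set H : Ω₁ → Ω → ℝ := fun x ω => ∑ d ∈ T, R d ω * φ d x with hHdef
  have hHbd : ∀ x ω, |H x ω| ≤ c := by
    intro x ω
    calc |H x ω| ≤ ∑ d ∈ T, |R d ω * φ d x| := Finset.abs_sum_le_sum_abs _ _
      _ ≤ ∑ d ∈ T, c * φ d x := by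
          refine Finset.sum_le_sum (fun d _ => ?_)
          rw [abs_mul, abs_of_nonneg (hφnn d x)]
          exact mul_le_mul_of_nonneg_right (hRbd d ω) (hφnn d x)
      _ = c * ∑ d ∈ T, φ d x := by rw [Finset.mul_sum]
      _ ≤ c * 1 := mul_le_mul_of_nonneg_left (hφsumle x) hc0
      _ = c := mul_one c
  have hHcont : ∀ ω, Continuous (fun x => H x ω) :=
    fun ω => continuous_finset_sum _ fun d _ => continuous_const.mul (hφcont d)
  -- key pointwise bound on K
  have hFH : ∀ ω, Continuous (fun ω₁ => F ω₁ ω) → ∀ x ∈ K, |F x ω - H x ω| ≤ e k ω := by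
    intro ω hω x hx
    have hsplit : F x ω - H x ω = ∑ d ∈ T, φ d x * (F x ω - R d ω) := by
      have h1 : F x ω = ∑ d ∈ T, φ d x * F x ω := by
        rw [← Finset.sum_mul, hφsumK x hx, one_mul]
      calc F x ω - H x ω = ∑ d ∈ T, φ d x * F x ω - ∑ d ∈ T, R d ω * φ d x := by
            rw [← h1, hHdef]
        _ = ∑ d ∈ T, (φ d x * F x ω - R d ω * φ d x) := by rw [Finset.sum_sub_distrib]
        _ = ∑ d ∈ T, φ d x * (F x ω - R d ω) := by
            refine Finset.sum_congr rfl (fun d _ => by ring)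
    rw [hsplit]
    calc |∑ d ∈ T, φ d x * (F x ω - R d ω)| ≤ ∑ d ∈ T, |φ d x * (F x ω - R d ω)| :=
          Finset.abs_sum_le_sum_abs _ _
      _ ≤ ∑ d ∈ T, φ d x * e k ω := by
          refine Finset.sum_le_sum (fun d _ => ?_)
          rw [abs_mul, abs_of_nonneg (hφnn d x)]
          by_cases hφ0 : φ d x = 0
          · rw [hφ0]; simp
          · refine mul_le_mul_of_nonneg_left ?_ (hφnn d x)
            -- main estimate: |F x ω - F d ω| ≤ e k ω via a sequence in D
            have hxd : dist x (d : Ω₁) < δk := hφsupp d x hφ0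
            -- approximating sequence
            have hu : ∀ j : ℕ, ∃ u ∈ D, dist x u < min (1 / ((j : ℝ) + 1)) (δk - dist x (d : Ω₁)) := by
              intro j
              refine hDdense x hx _ (lt_min (by positivity) (by linarith))
            choose u hu1 hu2 using hu
            have huD : ∀ j, dist (u j) (d : Ω₁) < δk := by
              intro j
              have h1 := (hu2 j).trans_le (min_le_right _ _)
              calc dist (u j) (d : Ω₁) ≤ dist (u j) x + dist x (d : Ω₁) := dist_triangle _ _ _
                _ < (δk - dist x (d : Ω₁)) + dist x (d : Ω₁) := by
                    rw [dist_comm (u j) x]; linarith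
                _ = δk := by ring
            have hulim : Tendsto u atTop (nhds x) := by
              rw [Metric.tendsto_atTop]
              intro r hr
              obtain ⟨N, hN⟩ := (one_div_nat_succ_eventually_lt hr).exists_forall_of_atTop
              exact ⟨N, fun j hj => by
                rw [dist_comm]
                exact ((hu2 j).trans_le (min_le_left _ _)).trans (hN j hj)⟩
            have hlim : Tendsto (fun j => |F (u j) ω - F (d : Ω₁) ω|) atTop
                (nhds |F x ω - F (d : Ω₁) ω|) := by
              have h1 : Tendsto (fun j => F (u j) ω) atTop (nhds (F x ω)) :=
                (hω.tendsto x).comp hulim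
              exact (h1.sub (tendsto_const_nhds (x := F (d : Ω₁) ω))).abs
            refine le_of_tendsto hlim (Eventually.of_forall fun j => ?_)
            exact hterm k ω (u j, (d : Ω₁)) ⟨hu1 j, d.2, huD j⟩
      _ = (∑ d ∈ T, φ d x) * e k ω := by rw [Finset.sum_mul]
      _ = 1 * e k ω := by rw [hφsumK x hx]
      _ = e k ω := one_mul _
  -- inner integral bound
  have hinner : ∀ (ν : Measure Ω₁), IsProbabilityMeasure ν → (ν Kᶜ).toReal ≤ rm →
      ∀ ω : Ω, Continuous (fun ω₁ => F ω₁ ω) →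
      |(∫ x, F x ω ∂ν) - ∫ x, H x ω ∂ν| ≤ e k ω + 2 * c * rm := by
    intro ν hν hνK ω hω
    haveI := hν
    have hFint : Integrable (fun x => F x ω) ν :=
      Integrable.mono' (integrable_const c) (hFsec2 ω).aestronglyMeasurable
        (ae_of_all _ fun x => by rw [Real.norm_eq_abs]; exact hFb' x ω)
    have hHint : Integrable (fun x => H x ω) ν :=
      Integrable.mono' (integrable_const c) (hHcont ω).aestronglyMeasurable
        (ae_of_all _ fun x => by rw [Real.norm_eq_abs]; exact hHbd x ω)
    rw [← integral_sub hFint hHint]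
    have h1 : |∫ x, (F x ω - H x ω) ∂ν| ≤ ∫ x, |F x ω - H x ω| ∂ν := by
      simpa [Real.norm_eq_abs] using
        norm_integral_le_integral_norm (μ := ν) (fun x => F x ω - H x ω)
    refine h1.trans ?_
    have h2 : ∀ x, |F x ω - H x ω| ≤ e k ω + Kᶜ.indicator (fun _ => 2 * c) x := by
      intro x
      by_cases hx : x ∈ K
      · rw [Set.indicator_of_notMem (by simp [hx])]
        rw [add_zero]
        exact hFH ω hω x hx
      · rw [Set.indicator_of_mem (Set.mem_compl hx)]
        linarith [hFb' x ω, hHbd x ω, abs_sub (F x ω) (H x ω), hennn k ω]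
    have h3 : Integrable (fun x => e k ω + Kᶜ.indicator (fun _ => 2 * c) x) ν :=
      (integrable_const _).add ((integrable_const _).indicator hKmeas.compl)
    calc ∫ x, |F x ω - H x ω| ∂ν ≤ ∫ x, (e k ω + Kᶜ.indicator (fun _ => 2 * c) x) ∂ν :=
          integral_mono (hFint.sub hHint).abs h3 h2
      _ = e k ω + (ν Kᶜ).toReal * (2 * c) := by
          rw [integral_add (integrable_const _) ((integrable_const _).indicator hKmeas.compl),
            integral_const, integral_indicator_const _ hKmeas.compl]
          simp [measureReal_def]
      _ ≤ e k ω + 2 * c * rm := by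
          have h4 : (ν Kᶜ).toReal * (2 * c) ≤ rm * (2 * c) :=
            mul_le_mul_of_nonneg_right hνK (by positivity)
          linarith
  -- kernel integrals of the partition functions
  have hGsm : ∀ d : ↥D, StronglyMeasurable
      (Function.uncurry fun (_ : Ω) (x : Ω₁) => G d x) := by
    intro d
    have : Measurable (Function.uncurry fun (_ : Ω) (x : Ω₁) => G d x) :=
      (G d).continuous.measurable.comp measurable_snd
    exact this.stronglyMeasurable
  have hIGnmeas : ∀ n (d : ↥D), Measurable (fun ω => ∫ x, G d x ∂(Qn n ω)) :=
    fun n d => ((hGsm d).integral_kernel_prod_right (κ := Qn n)).measurable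
  have hIGQmeas : ∀ d : ↥D, Measurable (fun ω => ∫ x, G d x ∂(Q ω)) :=
    fun d => ((hGsm d).integral_kernel_prod_right (κ := Q)).measurable
  have hIGbd : ∀ (ν : Measure Ω₁), IsProbabilityMeasure ν → ∀ d : ↥D,
      |∫ x, G d x ∂ν| ≤ 2 := by
    intro ν hν d
    haveI := hν
    have := norm_integral_le_of_norm_le (μ := ν) (f := fun x => G d x)
      (integrable_const (2:ℝ)) (ae_of_all _ fun x => hφbd d x)
    simpa using this
  -- rewriting sums as integrals of H
  have key : ∀ (ν : Measure Ω₁), IsProbabilityMeasure ν → ∀ ω : Ω,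
      ∑ d ∈ T, R d ω * ∫ x, G d x ∂ν = ∫ x, H x ω ∂ν := by
    intro ν hν ω
    haveI := hν
    have h1 : ∫ x, H x ω ∂ν = ∑ d ∈ T, ∫ x, R d ω * G d x ∂ν := by
      rw [← integral_finset_sum T (fun d _ => (((G d).integrable ν).const_mul (R d ω)))]
      rfl
    rw [h1]
    refine Finset.sum_congr rfl (fun d _ => ?_)
    rw [integral_const_mul]
  -- integrability over P
  have hXbd : ∀ (ν : Measure Ω₁), IsProbabilityMeasure ν → ∀ ω : Ω,
      |∫ x, F x ω ∂ν| ≤ c := by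
    intro ν hν ω
    haveI := hν
    have := norm_integral_le_of_norm_le (μ := ν) (f := fun x => F x ω)
      (integrable_const c) (ae_of_all _ fun x => by rw [Real.norm_eq_abs]; exact hFb' x ω)
    simpa using this
  have hXint : ∀ n, Integrable (fun ω => ∫ ω₁, F ω₁ ω ∂(Qn n ω)) P := by
    intro n
    refine Integrable.mono' (integrable_const c) (hXmeas n).aestronglyMeasurable
      (ae_of_all _ fun ω => ?_)
    rw [Real.norm_eq_abs]
    exact hXbd _ inferInstance ω
  have hYint : Integrable (fun ω => ∫ ω₁, F ω₁ ω ∂(Q ω)) P := by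
    refine Integrable.mono' (integrable_const c) hYmeas.aestronglyMeasurable
      (ae_of_all _ fun ω => ?_)
    rw [Real.norm_eq_abs]
    exact hXbd _ inferInstance ω
  have hIGn_int : ∀ n (d : ↥D), Integrable (fun ω => R d ω * ∫ x, G d x ∂(Qn n ω)) P := by
    intro n d
    refine Integrable.mono' (integrable_const (c * 2))
      ((hRmeas d).mul (hIGnmeas n d)).aestronglyMeasurable (ae_of_all _ fun ω => ?_)
    rw [Real.norm_eq_abs, abs_mul]
    exact mul_le_mul (hRbd d ω) (hIGbd _ inferInstance d) (abs_nonneg _) hc0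
  have hIGQ_int : ∀ d : ↥D, Integrable (fun ω => R d ω * ∫ x, G d x ∂(Q ω)) P := by
    intro d
    refine Integrable.mono' (integrable_const (c * 2))
      ((hRmeas d).mul (hIGQmeas d)).aestronglyMeasurable (ae_of_all _ fun ω => ?_)
    rw [Real.norm_eq_abs, abs_mul]
    exact mul_le_mul (hRbd d ω) (hIGbd _ inferInstance d) (abs_nonneg _) hc0
  have hXHint : ∀ n, Integrable (fun ω => ∑ d ∈ T, R d ω * ∫ x, G d x ∂(Qn n ω)) P :=
    fun n => integrable_finset_sum _ (fun d _ => hIGn_int n d)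
  have hYHint : Integrable (fun ω => ∑ d ∈ T, R d ω * ∫ x, G d x ∂(Q ω)) P :=
    integrable_finset_sum _ (fun d _ => hIGQ_int d)
  -- the middle term
  set M : ℕ → ℝ := fun n => ∑ d ∈ T,
    ((∫ ω, R d ω * ∫ x, G d x ∂(Qn n ω) ∂P) - ∫ ω, R d ω * ∫ x, G d x ∂(Q ω) ∂P)
    with hMdef
  have hM : Tendsto M atTop (nhds 0) := by
    have h0 : (0 : ℝ) = ∑ _d ∈ T, (0:ℝ) := by simp
    rw [hMdef, h0]
    refine tendsto_finset_sum _ (fun d _ => ?_)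
    have := (hstable (G d) (R d) (hRmeas d) ⟨c, fun ω => hRbd d ω⟩).sub
      (tendsto_const_nhds (x := ∫ ω, R d ω * ∫ x, G d x ∂(Q ω) ∂P))
    simpa using this
  have hMeq : ∀ n, M n = (∫ ω, (∑ d ∈ T, R d ω * ∫ x, G d x ∂(Qn n ω)) ∂P)
      - ∫ ω, (∑ d ∈ T, R d ω * ∫ x, G d x ∂(Q ω)) ∂P := by
    intro n
    simp only [hMdef]
    rw [Finset.sum_sub_distrib, integral_finset_sum T (fun d _ => hIGn_int n d),
      integral_finset_sum T (fun d _ => hIGQ_int d)]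
  -- main splitting
  set a : ℕ → ℝ := fun n =>
    ∫ ω, ((∫ ω₁, F ω₁ ω ∂(Qn n ω)) - ∫ ω₁, F ω₁ ω ∂(Q ω)) ∂P with hadef
  have hsplit2 : ∀ n, a n - M n =
      ∫ ω, (((∫ ω₁, F ω₁ ω ∂(Qn n ω)) - ∑ d ∈ T, R d ω * ∫ x, G d x ∂(Qn n ω))
        - ((∫ ω₁, F ω₁ ω ∂(Q ω)) - ∑ d ∈ T, R d ω * ∫ x, G d x ∂(Q ω))) ∂P := by
    intro n
    have i1 := integral_sub ((hXint n).sub (hXHint n)) (hYint.sub hYHint)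
    have i2 := integral_sub (hXint n) (hXHint n)
    have i3 := integral_sub hYint hYHint
    have i4 := integral_sub (hXint n) hYint
    simp only [Pi.sub_apply] at i1
    rw [i1, i2, i3, hMeq n]
    have han : a n = ∫ ω, ((∫ ω₁, F ω₁ ω ∂(Qn n ω)) - ∫ ω₁, F ω₁ ω ∂(Q ω)) ∂P := rfl
    rw [han, i4]
    ring
  have hbound : ∀ n, |a n - M n| ≤ 2 * (∫ ω, e k ω ∂P) + 4 * c * rm := by
    intro n
    rw [hsplit2 n]
    have hball : ∀ᵐ ω ∂P, ‖(((∫ ω₁, F ω₁ ω ∂(Qn n ω)) - ∑ d ∈ T, R d ω * ∫ x, G d x ∂(Qn n ω))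
        - ((∫ ω₁, F ω₁ ω ∂(Q ω)) - ∑ d ∈ T, R d ω * ∫ x, G d x ∂(Q ω)))‖
        ≤ 2 * e k ω + 4 * c * rm := by
      filter_upwards [hFc] with ω hω
      rw [Real.norm_eq_abs]
      rw [key (Qn n ω) inferInstance ω, key (Q ω) inferInstance ω]
      have h1 := hinner (Qn n ω) inferInstance (htoReal _ (hQnK n ω)) ω hω
      have h2 := hinner (Q ω) inferInstance (htoReal _ (hQK ω)) ω hω
      have h3 := abs_sub ((∫ x, F x ω ∂(Qn n ω)) - ∫ x, H x ω ∂(Qn n ω))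
        ((∫ x, F x ω ∂(Q ω)) - ∫ x, H x ω ∂(Q ω))
      linarith
    have hbint : Integrable (fun ω => 2 * e k ω + 4 * c * rm) P :=
      ((hint_e k).const_mul 2).add (integrable_const _)
    have := norm_integral_le_of_norm_le hbint hball
    rw [Real.norm_eq_abs] at this
    refine this.trans ?_
    rw [integral_add ((hint_e k).const_mul 2) (integrable_const _),
      integral_const_mul, integral_const]
    simp
  -- conclusion
  obtain ⟨N, hN⟩ := Metric.tendsto_atTop.1 hM (ε / 4) (by positivity)
  refine ⟨N, fun n hn => ?_⟩
  have h2 := hN n hn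
  rw [Real.dist_eq, sub_zero] at h2
  have h1 := hbound n
  have h3 : |a n| ≤ |a n - M n| + |M n| := by
    calc |a n| = |(a n - M n) + M n| := by ring_nf
      _ ≤ |a n - M n| + |M n| := abs_add_le _ _
  have : dist (a n) 0 < ε := by
    rw [Real.dist_eq, sub_zero]
    have : |a n| < 2 * (ε / 8) + ε / 4 + ε / 4 := by
      have h4 : 2 * (∫ ω, e k ω ∂P) < 2 * (ε / 8) := by linarith
      linarith
    linarith
  exact this
end
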